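/- Define α_{2n,2m} = (1/(2π)) ∫_{ℝ²} √(y²+z²) H_{2n}(y) H_{2m}(z) e^{-(y²+z²)/2} dy dz. Then α_{0,0} = √(π/2), α_{2,0} = α_{0,2} = (1/2)√(π/2), and α_{0,0}·(−1/√(2π)) + 2 α_{0,2}·(1/√(2π)) = 0. -/

import Mathlib

open Real Polynomial Set MeasureTheory

lemma herm0 (x : ℝ) : (Polynomial.aeval x (Polynomial.hermite 0) : ℝ) = 1 := by
  simp [Polynomial.hermite_zero]

lemma herm2 (x : ℝ) : (Polynomial.aeval x (Polynomial.hermite 2) : ℝ) = x^2 - 1 := by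
  have h : Polynomial.hermite 2 = Polynomial.X ^ 2 - Polynomial.C 1 := by
    rw [show (2:ℕ) = 1 + 1 from rfl, Polynomial.hermite_succ, Polynomial.hermite_one]
    simp [sq]
  rw [h]
  simp

lemma intOn (n : ℕ) : IntegrableOn (fun r : ℝ => r ^ n * Real.exp (-r^2/2)) (Ioi 0) := by
  have h := integrableOn_rpow_mul_exp_neg_mul_sq (b := 1/2) (by norm_num) (s := n)
    (lt_of_lt_of_le (by norm_num) (Nat.cast_nonneg n))
  have e : (fun x : ℝ => x ^ ((n:ℕ):ℝ) * Real.exp (-(1/2) * x ^ 2)) =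
      fun x => x ^ n * Real.exp (-x^2/2) := by
    funext x; rw [Real.rpow_natCast]; congr 1; ring
  rwa [e] at h

lemma intCos : IntegrableOn (fun θ : ℝ => (Real.cos θ)^2) (Ioo (-π) π) := by
  have h : IntervalIntegrable (fun θ : ℝ => (Real.cos θ)^2) volume (-π) π :=
    (continuous_cos.pow 2).intervalIntegrable _ _
  have := h.1
  exact this.mono_set Ioo_subset_Ioc_self

lemma intOne : IntegrableOn (fun _ : ℝ => (1:ℝ)) (Ioo (-π) π) :=
  integrableOn_const (by rw [Real.volume_Ioo]; exact ENNReal.ofReal_ne_top)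

lemma vol_Ioo : (volume (Ioo (-π) π)).toReal = 2 * π := by
  rw [Real.volume_Ioo, ENNReal.toReal_ofReal (by linarith [Real.pi_pos])]
  ring

open Real Polynomial Set MeasureTheory

lemma rad (n : ℕ) : ∫ r in Ioi (0:ℝ), r ^ n * Real.exp (-r^2/2) =
    (1/2 : ℝ) ^ (-((n:ℝ)+1)/2) * (1/2) * Real.Gamma (((n:ℝ)+1)/2) := by
  have h := integral_rpow_mul_exp_neg_mul_rpow (p := 2) (q := n) (b := 1/2)
    (by norm_num) (lt_of_lt_of_le (by norm_num) (Nat.cast_nonneg n)) (by norm_num)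
  have e : ∀ x : ℝ, x ^ ((n:ℕ):ℝ) * Real.exp (-(1/2) * x ^ (2:ℝ)) = x ^ n * Real.exp (-x^2/2) := by
    intro x
    rw [Real.rpow_natCast, show (2:ℝ) = ((2:ℕ):ℝ) by norm_num, Real.rpow_natCast]
    congr 1
    ring
  simp_rw [e] at h
  rw [h]

lemma gam32 : Real.Gamma (3/2) = Real.sqrt π / 2 := by
  rw [show (3/2:ℝ) = 1/2 + 1 by ring, Real.Gamma_add_one (by norm_num), Real.Gamma_one_half_eq]
  ring

lemma gam52 : Real.Gamma (5/2) = 3 * Real.sqrt π / 4 := by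
  rw [show (5/2:ℝ) = 3/2 + 1 by ring, Real.Gamma_add_one (by norm_num), gam32]
  ring

lemma pow_half_neg (a : ℝ) : (1/2 : ℝ) ^ (-a) = (2:ℝ) ^ a := by
  rw [one_div, Real.rpow_neg (by norm_num), Real.inv_rpow (by norm_num), inv_inv]

lemma two_rpow_32 : (2:ℝ) ^ ((3:ℝ)/2) = 2 * Real.sqrt 2 := by
  rw [show (3/2:ℝ) = 1 + 1/2 by ring, Real.rpow_add (by norm_num), Real.rpow_one,
    ← Real.sqrt_eq_rpow]

lemma two_rpow_52 : (2:ℝ) ^ ((5:ℝ)/2) = 4 * Real.sqrt 2 := by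
  rw [show (5/2:ℝ) = 2 + 1/2 by ring, Real.rpow_add (by norm_num),
    ← Real.sqrt_eq_rpow, show (2:ℝ) ^ (2:ℝ) = 4 by
      rw [show (2:ℝ) = ((2:ℕ):ℝ) by norm_num, Real.rpow_natCast]; norm_num]

lemma J2 : ∫ r in Ioi (0:ℝ), r ^ 2 * Real.exp (-r^2/2) = Real.sqrt (π/2) := by
  have h2 : Real.sqrt 2 * Real.sqrt 2 = 2 := Real.mul_self_sqrt (by norm_num)
  rw [rad 2]
  norm_num
  rw [pow_half_neg, two_rpow_32, gam32, eq_div_iff (by positivity)]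
  ring_nf
  nlinarith [h2, Real.sqrt_nonneg π]

lemma J4 : ∫ r in Ioi (0:ℝ), r ^ 4 * Real.exp (-r^2/2) = 3 * Real.sqrt (π/2) := by
  have h2 : Real.sqrt 2 * Real.sqrt 2 = 2 := Real.mul_self_sqrt (by norm_num)
  rw [rad 4]
  norm_num
  rw [pow_half_neg, two_rpow_52, gam52]
  field_simp
  nlinarith [h2, Real.sqrt_nonneg π]

lemma polar_eq (f : ℝ × ℝ → ℝ) :
    (∫ p : ℝ × ℝ, f p) =
      ∫ p in Ioi (0:ℝ) ×ˢ Ioo (-π) π, p.1 * f (p.1 * Real.cos p.2, p.1 * Real.sin p.2) := by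
  rw [← integral_comp_polarCoord_symm f]
  simp [polarCoord_target, polarCoord_symm_apply, smul_eq_mul]

lemma cos_sq_int : ∫ θ in Ioo (-π) π, (Real.cos θ)^2 = π := by
  rw [← MeasureTheory.integral_Ioc_eq_integral_Ioo,
    ← intervalIntegral.integral_of_le (by linarith [Real.pi_pos])]
  rw [integral_cos_sq]
  simp [Real.sin_pi, Real.cos_pi]

theorem stmt10 (α : ℕ → ℕ → ℝ)
    (hα : ∀ a b : ℕ, α a b = (1 / (2 * π)) *
      ∫ p : ℝ × ℝ, Real.sqrt (p.1 ^ 2 + p.2 ^ 2) *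
        (Polynomial.aeval p.1 (Polynomial.hermite a) : ℝ) *
        (Polynomial.aeval p.2 (Polynomial.hermite b) : ℝ) *
        Real.exp (-(p.1 ^ 2 + p.2 ^ 2) / 2)) :
    α 0 0 = Real.sqrt (π / 2) ∧
    α 2 0 = (1 / 2) * Real.sqrt (π / 2) ∧
    α 0 2 = (1 / 2) * Real.sqrt (π / 2) ∧
    α 0 0 * (-(Real.sqrt (2 * π))⁻¹) + 2 * α 0 2 * (Real.sqrt (2 * π))⁻¹ = 0 := by
  have hπ : (0:ℝ) < π := Real.pi_pos
  have key00 : (∫ p : ℝ × ℝ, Real.sqrt (p.1 ^ 2 + p.2 ^ 2) *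
      (Polynomial.aeval p.1 (Polynomial.hermite 0) : ℝ) *
      (Polynomial.aeval p.2 (Polynomial.hermite 0) : ℝ) *
      Real.exp (-(p.1 ^ 2 + p.2 ^ 2) / 2)) = 2 * π * Real.sqrt (π / 2) := by
    rw [polar_eq]
    rw [MeasureTheory.setIntegral_congr_fun (measurableSet_Ioi.prod measurableSet_Ioo)
      (g := fun p : ℝ × ℝ => p.1 ^ 2 * Real.exp (-p.1 ^ 2 / 2) * 1)
      (by
        rintro ⟨r, θ⟩ ⟨hr, -⟩
        simp only [herm0, mul_one]
        have hrs : (r * Real.cos θ) ^ 2 + (r * Real.sin θ) ^ 2 = r ^ 2 := by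
          have := Real.sin_sq_add_cos_sq θ; nlinarith
        rw [hrs, Real.sqrt_sq (le_of_lt hr)]
        ring)]
    have hp := MeasureTheory.setIntegral_prod_mul (μ := volume) (ν := volume)
      (f := fun r : ℝ => r ^ 2 * Real.exp (-r ^ 2 / 2)) (g := fun _ : ℝ => (1:ℝ))
      (Ioi 0) (Ioo (-π) π)
    rw [← Measure.volume_eq_prod] at hp
    rw [hp, J2, MeasureTheory.setIntegral_const, measureReal_def, vol_Ioo]
    simp
    ring
  have key20 : (∫ p : ℝ × ℝ, Real.sqrt (p.1 ^ 2 + p.2 ^ 2) *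
      (Polynomial.aeval p.1 (Polynomial.hermite 2) : ℝ) *
      (Polynomial.aeval p.2 (Polynomial.hermite 0) : ℝ) *
      Real.exp (-(p.1 ^ 2 + p.2 ^ 2) / 2)) = π * Real.sqrt (π / 2) := by
    rw [polar_eq]
    rw [MeasureTheory.setIntegral_congr_fun (measurableSet_Ioi.prod measurableSet_Ioo)
      (g := fun p : ℝ × ℝ => p.1 ^ 4 * Real.exp (-p.1 ^ 2 / 2) * Real.cos p.2 ^ 2
        - p.1 ^ 2 * Real.exp (-p.1 ^ 2 / 2) * 1)
      (by
        rintro ⟨r, θ⟩ ⟨hr, -⟩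
        simp only [herm0, herm2, mul_one]
        have hrs : (r * Real.cos θ) ^ 2 + (r * Real.sin θ) ^ 2 = r ^ 2 := by
          have := Real.sin_sq_add_cos_sq θ; nlinarith
        rw [hrs, Real.sqrt_sq (le_of_lt hr)]
        ring)]
    have h1 : IntegrableOn (fun p : ℝ × ℝ => p.1 ^ 4 * Real.exp (-p.1 ^ 2 / 2) * Real.cos p.2 ^ 2)
        (Ioi (0:ℝ) ×ˢ Ioo (-π) π) := by
      rw [IntegrableOn, Measure.volume_eq_prod, ← Measure.prod_restrict]
      exact (intOn 4).mul_prod intCos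
    have h2 : IntegrableOn (fun p : ℝ × ℝ => p.1 ^ 2 * Real.exp (-p.1 ^ 2 / 2) * (1:ℝ))
        (Ioi (0:ℝ) ×ˢ Ioo (-π) π) := by
      rw [IntegrableOn, Measure.volume_eq_prod, ← Measure.prod_restrict]
      exact (intOn 2).mul_prod intOne
    rw [MeasureTheory.integral_sub h1 h2]
    have hpa := MeasureTheory.setIntegral_prod_mul (μ := volume) (ν := volume)
      (f := fun r : ℝ => r ^ 4 * Real.exp (-r ^ 2 / 2)) (g := fun θ : ℝ => Real.cos θ ^ 2)
      (Ioi 0) (Ioo (-π) π)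
    have hpb := MeasureTheory.setIntegral_prod_mul (μ := volume) (ν := volume)
      (f := fun r : ℝ => r ^ 2 * Real.exp (-r ^ 2 / 2)) (g := fun _ : ℝ => (1:ℝ))
      (Ioi 0) (Ioo (-π) π)
    rw [← Measure.volume_eq_prod] at hpa hpb
    rw [hpa, hpb, J2, J4, cos_sq_int, MeasureTheory.setIntegral_const, measureReal_def, vol_Ioo]
    simp
    ring
  have key02 : (∫ p : ℝ × ℝ, Real.sqrt (p.1 ^ 2 + p.2 ^ 2) *
      (Polynomial.aeval p.1 (Polynomial.hermite 0) : ℝ) *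
      (Polynomial.aeval p.2 (Polynomial.hermite 2) : ℝ) *
      Real.exp (-(p.1 ^ 2 + p.2 ^ 2) / 2)) = π * Real.sqrt (π / 2) := by
    rw [Measure.volume_eq_prod, ← MeasureTheory.integral_prod_swap]
    rw [← key20, Measure.volume_eq_prod]
    congr 1
    funext z
    simp only [Prod.fst_swap, Prod.snd_swap, herm0, herm2, mul_one, one_mul]
    rw [add_comm (z.2 ^ 2)]
  refine ⟨?_, ?_, ?_, ?_⟩
  · rw [hα 0 0, key00]
    field_simp
  · rw [hα 2 0, key20]
    field_simp
  · rw [hα 0 2, key02]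
    field_simp
  · rw [hα 0 0, hα 0 2, key00, key02]
    field_simp
    ring
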